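/- Let κ ≥ 0, λ real, p real, n ≥ 0 a fixed integer, and for h > 0 define ω_n(h) = -∑_{m=0}^{n} ((2^{m+2}κ/(3^m h²)) sin^{2m+2}(ph/2) + i(2^m λ/(3^m h)) sin(ph) sin^{2m}(ph/2)) and ω̄ = -κp² - iλp. Then lim_{h→0⁺} ω_n(h) = ω̄. -/

import Mathlib

open Filter Finset

lemma sinc_lim (c : ℝ) :
    Tendsto (fun h : ℝ => Real.sin (c * h) / h) (nhdsWithin 0 (Set.Ioi 0)) (nhds c) := by
  have hd : HasDerivAt (fun h : ℝ => Real.sin (c * h)) c 0 := by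
    have := (Real.hasDerivAt_sin (c * 0)).comp 0 ((hasDerivAt_id 0).const_mul c)
    simp at this
    exact this
  have := hasDerivAt_iff_tendsto_slope.mp hd
  have h2 : Tendsto (slope (fun h : ℝ => Real.sin (c * h)) 0)
      (nhdsWithin 0 (Set.Ioi 0)) (nhds c) :=
    this.mono_left (nhdsWithin_mono _ (fun x hx => ne_of_gt hx))
  refine h2.congr (fun x => ?_)
  simp [slope_def_field, div_eq_mul_inv, mul_comm]

open Finset in
theorem stmt_14 (kappa lam p : ℝ) (hkappa : 0 ≤ kappa) (n : ℕ) :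
    Filter.Tendsto
      (fun h : ℝ => -(∑ m ∈ range (n+1),
        ((((2:ℝ)^(m+2) * kappa / (3^m * h^2) * Real.sin (p*h/2)^(2*m+2) : ℝ) : ℂ) +
          Complex.I * (((2:ℝ)^m * lam / (3^m * h) * Real.sin (p*h)
            * Real.sin (p*h/2)^(2*m) : ℝ) : ℂ))))
      (nhdsWithin 0 (Set.Ioi 0))
      (nhds (-((kappa * p^2 : ℝ) : ℂ) - Complex.I * ((lam * p : ℝ) : ℂ))) := by
  set L := nhdsWithin (0:ℝ) (Set.Ioi 0) with hL
  -- limit value for each term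
  set v : ℕ → ℂ := fun m =>
    (((2:ℝ)^(m+2) * kappa / 3^m * (p/2)^2 * (0:ℝ)^(2*m) : ℝ) : ℂ) +
      Complex.I * (((2:ℝ)^m * lam / 3^m * p * (0:ℝ)^(2*m) : ℝ) : ℂ) with hv
  have hsin2 : Tendsto (fun h : ℝ => Real.sin (p*h/2) / h) L (nhds (p/2)) := by
    have := sinc_lim (p/2)
    refine this.congr (fun x => ?_)
    ring_nf
  have hsin1 : Tendsto (fun h : ℝ => Real.sin (p*h) / h) L (nhds p) := sinc_lim p
  have hpow : ∀ m : ℕ, Tendsto (fun h : ℝ => Real.sin (p*h/2)^(2*m)) L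
      (nhds ((0:ℝ)^(2*m))) := by
    intro m
    have hc : Continuous (fun h : ℝ => Real.sin (p*h/2)^(2*m)) := by continuity
    have := hc.tendsto 0
    simp only [mul_zero, zero_div, Real.sin_zero] at this
    exact this.mono_left nhdsWithin_le_nhds
  have key : ∀ m : ℕ, Tendsto
      (fun h : ℝ =>
        (((2:ℝ)^(m+2) * kappa / (3^m * h^2) * Real.sin (p*h/2)^(2*m+2) : ℝ) : ℂ) +
          Complex.I * (((2:ℝ)^m * lam / (3^m * h) * Real.sin (p*h)
            * Real.sin (p*h/2)^(2*m) : ℝ) : ℂ)) L (nhds (v m)) := by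
    intro m
    have hre : Tendsto (fun h : ℝ =>
        (2:ℝ)^(m+2) * kappa / 3^m * (Real.sin (p*h/2)/h)^2 * Real.sin (p*h/2)^(2*m)) L
        (nhds ((2:ℝ)^(m+2) * kappa / 3^m * (p/2)^2 * (0:ℝ)^(2*m))) :=
      (tendsto_const_nhds.mul (hsin2.pow 2)).mul (hpow m)
    have him : Tendsto (fun h : ℝ =>
        (2:ℝ)^m * lam / 3^m * (Real.sin (p*h)/h) * Real.sin (p*h/2)^(2*m)) L
        (nhds ((2:ℝ)^m * lam / 3^m * p * (0:ℝ)^(2*m))) :=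
      (tendsto_const_nhds.mul hsin1).mul (hpow m)
    have hre' : Tendsto (fun h : ℝ =>
        (2:ℝ)^(m+2) * kappa / (3^m * h^2) * Real.sin (p*h/2)^(2*m+2)) L
        (nhds ((2:ℝ)^(m+2) * kappa / 3^m * (p/2)^2 * (0:ℝ)^(2*m))) := by
      refine hre.congr' ?_
      filter_upwards [self_mem_nhdsWithin] with h hh
      have hh0 : h ≠ 0 := ne_of_gt hh
      have h3 : (3:ℝ)^m ≠ 0 := by positivity
      field_simp
      ring
    have him' : Tendsto (fun h : ℝ =>
        (2:ℝ)^m * lam / (3^m * h) * Real.sin (p*h) * Real.sin (p*h/2)^(2*m)) L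
        (nhds ((2:ℝ)^m * lam / 3^m * p * (0:ℝ)^(2*m))) := by
      refine him.congr' ?_
      filter_upwards [self_mem_nhdsWithin] with h hh
      have hh0 : h ≠ 0 := ne_of_gt hh
      have h3 : (3:ℝ)^m ≠ 0 := by positivity
      field_simp
    exact ((Complex.continuous_ofReal.tendsto _).comp hre').add
      (tendsto_const_nhds.mul ((Complex.continuous_ofReal.tendsto _).comp him'))
  have hsum : Tendsto
      (fun h : ℝ => -(∑ m ∈ range (n+1),
        ((((2:ℝ)^(m+2) * kappa / (3^m * h^2) * Real.sin (p*h/2)^(2*m+2) : ℝ) : ℂ) +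
          Complex.I * (((2:ℝ)^m * lam / (3^m * h) * Real.sin (p*h)
            * Real.sin (p*h/2)^(2*m) : ℝ) : ℂ)))) L
      (nhds (-(∑ m ∈ range (n+1), v m))) :=
    (tendsto_finset_sum _ (fun m _ => key m)).neg
  have hval : ∑ m ∈ range (n+1), v m = v 0 := by
    refine Finset.sum_eq_single_of_mem 0 (Finset.mem_range.mpr (Nat.succ_pos n)) ?_
    intro m _ hm
    simp [hv, zero_pow (show 2*m ≠ 0 by omega)]
  have hv0 : v 0 = ((kappa * p^2 : ℝ) : ℂ) + Complex.I * ((lam * p : ℝ) : ℂ) := by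
    simp only [hv]
    norm_num
    push_cast
    ring
  rw [hval, hv0] at hsum
  convert hsum using 2
  ring
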